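/- Let {x̂ⁱ}_{i∈ℕ} be an orthonormal basis of a Hilbert space X and x_true ∈ X with Σ_{i=1}^∞ |⟨x_true, x̂ⁱ⟩| < ∞ (ℓ¹ coefficients). Let A : X → Y be bounded linear and ŷⁱ := A x̂ⁱ. Suppose for each n and i ≥ n+1 the expansion P_{Y_n} ŷⁱ = Σ_{j=1}^n β_j^{i,n} ŷʲ satisfies Σ_{j=1}^n (β_j^{i,n})² ≤ C uniformly in i and n. Then the minimum-norm solutions x_n of A P_{X_n} x = A x_true are bounded uniformly in n: ‖x_n‖ ≤ M for some M independent of n. -/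

import Mathlib

open RealInnerProductSpace

/-- Theorem 11 of Aspri–Korolev–Scherzer: if the ground truth has ℓ¹ coefficients in the
orthonormal basis `{x̂ⁱ}` and the expansion coefficients `β` of `P_{Yₙ} ŷⁱ` (for `i ≥ n`) are
uniformly ℓ²-bounded, then the minimum-norm solutions `xₙ = A⁻¹ P_{Yₙ} A x_true` of the projected
equations `A P_{Xₙ} x = A x_true` are uniformly bounded in norm. -/
theorem uniform_boundedness_of_projected_min_norm_solutions
    {X Y : Type*} [NormedAddCommGroup X] [InnerProductSpace ℝ X] [CompleteSpace X]
    [NormedAddCommGroup Y] [InnerProductSpace ℝ Y] [CompleteSpace Y]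
    (A : X →L[ℝ] Y) (hA : Function.Injective A)
    (v : ℕ → X) (hv : Orthonormal ℝ v)
    (hbasis : (Submodule.span ℝ (Set.range v)).topologicalClosure = ⊤)
    (xtrue : X) (hl1 : Summable fun i => |⟪xtrue, v i⟫|)
    (Xn : ℕ → Submodule ℝ X) [∀ n, FiniteDimensional ℝ (Xn n)]
    (hXn : ∀ n, Xn n = Submodule.span ℝ (Set.range fun i : Fin n => v i))
    (Cst : ℝ) (hCst : 0 < Cst)
    (hβ : ∀ n : ℕ, ∀ i : ℕ, n ≤ i → ∃ β : Fin n → ℝ,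
      (Submodule.orthogonalProjectionOnto ((Xn n).map (A : X →ₗ[ℝ] Y)) (A (v i)) : Y) =
        ∑ j, β j • A (v (j : ℕ)) ∧
      ∑ j, (β j) ^ 2 ≤ Cst)
    (xs : ℕ → X)
    (hxs_mem : ∀ n, xs n ∈ Xn n)
    (hxs_sol : ∀ n, A (xs n) =
      (Submodule.orthogonalProjectionOnto ((Xn n).map (A : X →ₗ[ℝ] Y)) (A xtrue) : Y)) :
    ∃ M : ℝ, ∀ n, ‖xs n‖ ≤ M := by
  classical
  set K : ℝ := max 1 (Real.sqrt Cst) with hKdef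
  have hK0 : (0:ℝ) ≤ K := le_trans zero_le_one (le_max_left _ _)
  set c : ℕ → ℝ := fun i => ⟪v i, xtrue⟫ with hcdef
  have hcsum : Summable fun i => |c i| := by
    simpa [hcdef, real_inner_comm] using hl1
  -- expansion of xtrue in the basis
  let b : HilbertBasis ℕ ℝ X := HilbertBasis.mk hv hbasis.ge
  have hxt : HasSum (fun i => c i • v i) xtrue := by
    have h := b.hasSum_repr xtrue
    have hb : ∀ i, b.repr xtrue i • b i = c i • v i := by
      intro i
      have hbi : b i = v i := congrFun (HilbertBasis.coe_mk hv hbasis.ge) i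
      rw [HilbertBasis.repr_apply_apply, hbi]
    exact (funext hb : (fun i => b.repr xtrue i • b i) = _) ▸ h
  refine ⟨(∑' i, |c i|) * K, fun n => ?_⟩
  set Yn := (Xn n).map (A : X →ₗ[ℝ] Y) with hYn
  -- construction of the preimages u i
  have hui : ∀ i : ℕ, ∃ u : X,
      A u = (Submodule.orthogonalProjectionOnto Yn (A (v i)) : Y) ∧ ‖u‖ ≤ K := by
    intro i
    by_cases h : i < n
    · refine ⟨v i, ?_, by rw [hv.1 i]; exact le_max_left _ _⟩
      have hmem : A (v i) ∈ Yn := by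
        refine ⟨v i, ?_, rfl⟩
        rw [hXn n]
        exact Submodule.subset_span ⟨⟨i, h⟩, rfl⟩
      exact (Submodule.starProjection_eq_self_iff.mpr hmem).symm
    · obtain ⟨β, hβ1, hβ2⟩ := hβ n i (not_lt.mp h)
      refine ⟨∑ j, β j • v (j : ℕ), ?_, ?_⟩
      · rw [map_sum]
        simp only [map_smul]
        exact hβ1.symm ▸ rfl
      · have hvv : Orthonormal ℝ (fun j : Fin n => v (j : ℕ)) :=
          hv.comp (fun j : Fin n => (j : ℕ)) Fin.val_injective
        have hnorm : ‖∑ j, β j • v (j : ℕ)‖ ^ 2 ≤ Cst := by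
          have h2 := hvv.inner_sum β β Finset.univ
          have h3 : ‖∑ j, β j • v (j : ℕ)‖ ^ 2 = ∑ j, (β j) ^ 2 := by
            rw [← real_inner_self_eq_norm_sq]
            simpa [sq] using h2
          rw [h3]; exact hβ2
        calc ‖∑ j, β j • v (j : ℕ)‖ ≤ Real.sqrt Cst :=
              (Real.le_sqrt (norm_nonneg _) hCst.le).mpr hnorm
          _ ≤ K := le_max_right _ _
  choose u hu hunorm using hui
  -- the series ∑ c i • u i converges
  have hbound : ∀ i, ‖c i • u i‖ ≤ |c i| * K := by
    intro i
    rw [norm_smul, Real.norm_eq_abs]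
    exact mul_le_mul_of_nonneg_left (hunorm i) (abs_nonneg _)
  have hsummable : Summable fun i => c i • u i :=
    Summable.of_norm_bounded (hcsum.mul_right K) hbound
  set s : X := ∑' i, c i • u i with hsdef
  have hs : HasSum (fun i => c i • u i) s := hsummable.hasSum
  -- A s = P (A xtrue)
  set P : Y →L[ℝ] Y := Yn.subtypeL.comp (Submodule.orthogonalProjectionOnto Yn) with hPdef
  have hAs : HasSum (fun i => c i • (Submodule.orthogonalProjectionOnto Yn (A (v i)) : Y)) (A s) := by
    have := hs.mapL A
    simpa [map_smul, hu] using this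
  have hPAx : HasSum (fun i => c i • (Submodule.orthogonalProjectionOnto Yn (A (v i)) : Y))
      (P (A xtrue)) := by
    have h1 : HasSum (fun i => c i • A (v i)) (A xtrue) := by
      have := hxt.mapL A
      simpa [map_smul] using this
    have := h1.mapL P
    simpa [hPdef, map_smul] using this
  have hAseq : A s = P (A xtrue) := hAs.unique hPAx
  have hxseq : xs n = s := by
    apply hA
    rw [hAseq, hxs_sol n]
    rfl
  -- norm estimate
  have hnsum : Summable fun i => ‖c i • u i‖ :=
    Summable.of_nonneg_of_le (fun i => norm_nonneg _) hbound (hcsum.mul_right K)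
  rw [hxseq]
  calc ‖s‖ ≤ ∑' i, ‖c i • u i‖ := norm_tsum_le_tsum_norm hnsum
    _ ≤ ∑' i, |c i| * K :=
        Summable.tsum_le_tsum hbound hnsum (hcsum.mul_right K)
    _ = (∑' i, |c i|) * K := tsum_mul_right
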